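/- Let L ≥ 0 and let f : ℝ → [0,∞] be convex, non-decreasing, with f(0) = 0, f finite and continuous on (-∞,1], f(p) = +∞ for p > 1, and f(1) ≥ L. Then the set {p ∈ ℝ : f(p) = L} is nonempty; define p_ℓ := min(sup{p ∈ ℝ : f(p) = L}, 1), q_ℓ := L/p_ℓ if p_ℓ > 0 and q_ℓ := 0 otherwise, and ζ : ℝ → [0,∞] by ζ(p) = 0 for p < 0, ζ(p) = q_ℓ·p for 0 ≤ p ≤ 1, and ζ(p) = +∞ for p > 1. Then (f ∨ ℓ_L)^{♯♯} = co(f ∨ ℓ_L) = f ∨ ζ, and this function is continuous on (-∞,1]. -/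

import Mathlib

open scoped Classical
open Topology
noncomputable section

/-- Fenchel conjugate (Legendre transform) of an extended-real-valued function:
`fconj f q = sup_{p ∈ ℝ} (p*q - f p)`. -/
def fconj (f : ℝ → EReal) (q : ℝ) : EReal := ⨆ p : ℝ, ((p * q : ℝ) : EReal) - f p

/-- Convexity for extended-real-valued functions on `ℝ`. -/
def ConvexE (f : ℝ → EReal) : Prop :=
  ∀ x y t : ℝ, 0 ≤ t → t ≤ 1 →
    f (t * x + (1 - t) * y) ≤ (t : EReal) * f x + ((1 - t : ℝ) : EReal) * f y

/-- The payoff function `ℓ_L`: `0` for `p ≤ 0`, `L` for `0 < p ≤ 1`, `+∞` for `p > 1`. -/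
def ellL (L : ℝ) (p : ℝ) : EReal :=
  if p ≤ 0 then 0 else if p ≤ 1 then (L : EReal) else ⊤

/-- Right derivative (as an extended real) of `f` at `p`, i.e. the infimum of the
right slopes `(f (p+h) - f p)/h` over `h > 0`. -/
def rightDE (f : ℝ → EReal) (p : ℝ) : EReal :=
  ⨅ h : {h : ℝ // 0 < h}, ((h.1⁻¹ : ℝ) : EReal) * (f (p + h.1) - f p)

/-- Left derivative (as an extended real) of `f` at `p`, i.e. the supremum of the
left slopes `(f p - f (p-h))/h` over `h > 0`. -/
def leftDE (f : ℝ → EReal) (p : ℝ) : EReal :=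
  ⨆ h : {h : ℝ // 0 < h}, ((h.1⁻¹ : ℝ) : EReal) * (f p - f (p - h.1))

/-- Closed convex envelope of `f`: the pointwise supremum of all lower semicontinuous
convex minorants of `f` (the largest closed convex function majorized by `f`). -/
def coE (f : ℝ → EReal) (p : ℝ) : EReal :=
  ⨆ g : {g : ℝ → EReal // ConvexE g ∧ LowerSemicontinuous g ∧ ∀ x, g x ≤ f x}, g.1 p

/-- Subdifferential of an extended-real-valued function at a point. -/
def subdiffE (f : ℝ → EReal) (p : ℝ) : Set ℝ :=
  {q : ℝ | ∀ r : ℝ, f p + ((q * (r - p) : ℝ) : EReal) ≤ f r}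

section helpers



lemma ConvexE.max' {f g : ℝ → EReal} (hf : ConvexE f) (hg : ConvexE g) :
    ConvexE (fun p => max (f p) (g p)) := by
  intro x y t ht ht1
  have ht' : (0:EReal) ≤ (t:ℝ) := by exact_mod_cast ht
  have ht1' : (0:EReal) ≤ ((1-t:ℝ):EReal) := by
    have : (0:ℝ) ≤ 1 - t := by linarith
    exact_mod_cast this
  refine max_le ?_ ?_
  · exact (hf x y t ht ht1).trans (add_le_add
      (mul_le_mul_of_nonneg_left (le_max_left _ _) ht')
      (mul_le_mul_of_nonneg_left (le_max_left _ _) ht1'))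
  · exact (hg x y t ht ht1).trans (add_le_add
      (mul_le_mul_of_nonneg_left (le_max_right _ _) ht')
      (mul_le_mul_of_nonneg_left (le_max_right _ _) ht1'))

lemma convexE_coe {φ : ℝ → ℝ} (h : ConvexOn ℝ Set.univ φ) :
    ConvexE (fun p => ((φ p : ℝ) : EReal)) := by
  intro x y t ht ht1
  have := h.2 (Set.mem_univ x) (Set.mem_univ y) ht (by linarith : (0:ℝ) ≤ 1 - t) (by ring)
  simp only [smul_eq_mul] at this
  calc ((φ (t * x + (1-t) * y) : ℝ) : EReal) ≤ ((t * φ x + (1-t) * φ y : ℝ) : EReal) := by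
        exact_mod_cast this
    _ = (t:EReal) * (φ x : EReal) + ((1-t:ℝ):EReal) * (φ y : EReal) := by
        rw [EReal.coe_add, EReal.coe_mul, EReal.coe_mul]

lemma convexE_ind : ConvexE (fun p : ℝ => if p ≤ 1 then (0:EReal) else ⊤) := by
  intro x y t ht ht1
  by_cases hx : x ≤ 1 <;> by_cases hy : y ≤ 1
  · have hc : t * x + (1 - t) * y ≤ 1 := by nlinarith
    simp [hc, hx, hy]
  · rcases eq_or_lt_of_le ht1 with rfl | ht1'
    · simp [hx]
    · have h1 : ((1 - t:ℝ):EReal) * ⊤ = ⊤ := EReal.coe_mul_top_of_pos (by linarith)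
      simp only [if_pos hx, if_neg hy, h1, mul_zero, zero_add]
      exact le_top
  · rcases eq_or_lt_of_le ht with rfl | ht'
    · have hc : (0:ℝ) * x + (1 - 0) * y = y := by ring
      simp only [hc, if_pos hy, EReal.coe_zero, zero_mul, zero_add]
      have h5 : ((1 - (0:ℝ):ℝ):EReal) * (0:EReal) = 0 := mul_zero _
      rw [h5]
      norm_num [hy]
    · have h1 : ((t:ℝ):EReal) * ⊤ = ⊤ := EReal.coe_mul_top_of_pos ht'
      simp only [if_neg hx, if_pos hy, h1, mul_zero, add_zero]
      exact le_top
  · have h2 : ((1 - t:ℝ):EReal) * ⊤ ≠ ⊥ := by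
      rcases eq_or_lt_of_le (by linarith : (0:ℝ) ≤ 1 - t) with h0 | hposs
      · rw [← h0]; simp
      · rw [EReal.coe_mul_top_of_pos hposs]; simp
    rcases eq_or_lt_of_le ht with rfl | ht'
    · have h1 : ((1 - (0:ℝ):ℝ):EReal) * ⊤ = ⊤ := EReal.coe_mul_top_of_pos (by norm_num)
      simp only [if_neg hx, if_neg hy, h1, EReal.coe_zero, zero_mul, zero_add]
      exact le_top
    · have h1 : ((t:ℝ):EReal) * ⊤ = ⊤ := EReal.coe_mul_top_of_pos ht'
      simp only [if_neg hx, if_neg hy, h1]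
      rw [EReal.top_add_of_ne_bot h2]
      exact le_top

lemma lsc_of_contOn {f : ℝ → EReal} (hc : ContinuousOn f (Set.Iic 1))
    (ht : ∀ p : ℝ, 1 < p → f p = ⊤) : LowerSemicontinuous f := by
  intro x y hy
  rcases lt_trichotomy x 1 with h | rfl | h
  · have hx : ContinuousAt f x := hc.continuousAt (Iic_mem_nhds h)
    exact hx (Ioi_mem_nhds hy)
  · have hsup : 𝓝[Set.Iic (1:ℝ)] 1 ⊔ 𝓝[Set.Ioi (1:ℝ)] 1 = 𝓝 (1:ℝ) := nhdsLE_sup_nhdsGT 1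
    rw [Filter.Eventually, ← hsup, Filter.mem_sup]
    constructor
    · exact (hc 1 (by simp)) (Ioi_mem_nhds hy)
    · have : ∀ᶠ z in 𝓝[Set.Ioi (1:ℝ)] 1, z ∈ Set.Ioi (1:ℝ) := eventually_mem_nhdsWithin
      refine this.mono fun z hz => ?_
      show f z > y
      rw [ht z hz]
      exact lt_of_lt_of_le hy le_top
  · have : ∀ᶠ z in 𝓝 x, z ∈ Set.Ioi (1:ℝ) := isOpen_Ioi.eventually_mem h
    refine this.mono fun z hz => ?_
    show f z > y
    rw [ht z hz]
    exact lt_of_lt_of_le hy le_top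

lemma ereal_le_of_forall_eps {c : ℝ} {X : EReal} (H : ∀ ε : ℝ, 0 < ε → ((c - ε : ℝ) : EReal) ≤ X) :
    (c : EReal) ≤ X := by
  by_contra hc
  push_neg at hc
  induction X using EReal.rec with
  | bot =>
      have := H 1 one_pos
      rw [le_bot_iff] at this
      exact EReal.coe_ne_bot _ this
  | coe x =>
      have hx : x < c := by exact_mod_cast hc
      have := H ((c - x)/2) (by linarith)
      rw [EReal.coe_le_coe_iff] at this
      linarith
  | top => exact absurd hc (by simp)

lemma ereal_eq_top_of_forall {X : EReal} (H : ∀ y : ℝ, (y : EReal) ≤ X) : X = ⊤ := by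
  induction X using EReal.rec with
  | bot => exact absurd (H 0) (by simp)
  | coe x =>
      have := H (x + 1)
      rw [EReal.coe_le_coe_iff] at this
      linarith
  | top => rfl

lemma ereal_sub_top (x : ℝ) : (x : EReal) - ⊤ = ⊥ := rfl



lemma convexOn_toReal {h : ℝ → EReal} (hc : ConvexE h) (hfin : ∀ r : ℝ, r ≤ 1 → h r ≠ ⊤)
    (hbot : ∀ r, h r ≠ ⊥) :
    ConvexOn ℝ (Set.Iic 1) (fun r => (h r).toReal) := by
  refine ⟨convex_Iic 1, ?_⟩
  intro x hx y hy a b ha hb hab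
  simp only [smul_eq_mul]
  have hb' : b = 1 - a := by linarith
  subst hb'
  have hxy : a * x + (1 - a) * y ≤ 1 := by
    calc a * x + (1 - a) * y ≤ a * 1 + (1 - a) * 1 := by
          apply add_le_add (mul_le_mul_of_nonneg_left hx ha)
            (mul_le_mul_of_nonneg_left hy hb)
      _ = 1 := by ring
  have key := hc x y a ha (by linarith)
  rw [← EReal.coe_toReal (hfin x hx) (hbot x), ← EReal.coe_toReal (hfin y hy) (hbot y),
    ← EReal.coe_toReal (hfin _ hxy) (hbot _)] at key
  rw [← EReal.coe_mul, ← EReal.coe_mul, ← EReal.coe_add] at key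
  exact_mod_cast key

lemma exists_subgrad {h : ℝ → EReal} (hc : ConvexE h) (hfin : ∀ r : ℝ, r ≤ 1 → h r ≠ ⊤)
    (hbot : ∀ r, h r ≠ ⊥) {p : ℝ} (hp : p < 1) :
    ∃ q : ℝ, ∀ r : ℝ, r ≤ 1 →
      h p + ((q * (r - p) : ℝ) : EReal) ≤ h r := by
  set φ : ℝ → ℝ := fun r => (h r).toReal with hφ
  have hconv := convexOn_toReal hc hfin hbot
  have hcoe : ∀ r : ℝ, r ≤ 1 → h r = ((φ r : ℝ) : EReal) := fun r hr =>
    (EReal.coe_toReal (hfin r hr) (hbot r)).symm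
  set m : ℝ := (p + 1) / 2 with hm
  have hpm : p < m := by rw [hm]; linarith
  have hm1 : m ≤ 1 := by rw [hm]; linarith
  set A : Set ℝ := (fun r => (φ p - φ r) / (p - r)) '' Set.Iio p with hA
  have hAne : A.Nonempty := ⟨(φ p - φ (p - 1)) / (p - (p - 1)), ⟨p - 1, by simp, rfl⟩⟩
  have hAbdd : BddAbove A := by
    refine ⟨(φ m - φ p) / (m - p), ?_⟩
    rintro a ⟨r, hr, rfl⟩
    have hr' : (r:ℝ) < p := hr
    have := hconv.slope_mono_adjacent (Set.mem_Iic.2 (le_of_lt (hr'.trans hp)))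
      (Set.mem_Iic.2 hm1) hr' hpm
    exact this
  set q := sSup A with hq
  refine ⟨q, fun r hr => ?_⟩
  rcases lt_trichotomy r p with hrp | rfl | hpr
  · -- r < p
    have hmem : (φ p - φ r) / (p - r) ∈ A := ⟨r, hrp, rfl⟩
    have hle : (φ p - φ r) / (p - r) ≤ q := le_csSup hAbdd hmem
    have hpr' : (0:ℝ) < p - r := by linarith
    rw [div_le_iff₀ hpr'] at hle
    have : φ p + q * (r - p) ≤ φ r := by nlinarith
    rw [hcoe p (le_of_lt hp), hcoe r hr, ← EReal.coe_add]
    exact_mod_cast this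
  · simp
  · -- p < r
    have hle : q ≤ (φ r - φ p) / (r - p) := by
      apply csSup_le hAne
      rintro a ⟨s, hs, rfl⟩
      have hs' : (s:ℝ) < p := hs
      exact hconv.slope_mono_adjacent (Set.mem_Iic.2 (le_of_lt (hs'.trans hp)))
        (Set.mem_Iic.2 hr) hs' hpr
    have hpr' : (0:ℝ) < r - p := by linarith
    rw [le_div_iff₀ hpr'] at hle
    have : φ p + q * (r - p) ≤ φ r := by nlinarith
    rw [hcoe p (le_of_lt hp), hcoe r hr, ← EReal.coe_add]
    exact_mod_cast this

end helpers

/-- **Proposition 3.3(a)**: with `p_ℓ := min(sup{p : f p = L}, 1)`,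
`q_ℓ := L/p_ℓ` (or `0` if `p_ℓ = 0`) and the 'facelift'
`ζ(p) = 0` for `p < 0`, `q_ℓ·p` for `0 ≤ p ≤ 1`, `+∞` for `p > 1`, one has
`{p : f p = L} ≠ ∅` and `(f ∨ ℓ_L)^{♯♯} = co (f ∨ ℓ_L) = f ∨ ζ`, the latter being
continuous on `(-∞,1]`. -/
theorem biconj_max_ellL_eq_facelift
    (L : ℝ) (hL : 0 ≤ L) (f : ℝ → EReal)
    (hpos : ∀ p, 0 ≤ f p) (hconv : ConvexE f) (hmono : Monotone f) (hf0 : f 0 = 0)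
    (hfin : ∀ p : ℝ, p ≤ 1 → f p ≠ ⊤) (hcont : ContinuousOn f (Set.Iic 1))
    (htop : ∀ p : ℝ, 1 < p → f p = ⊤) (hL1 : (L : EReal) ≤ f 1)
    (pℓ qℓ : ℝ) (ζ : ℝ → EReal)
    (hpℓ : pℓ = min (sSup {p : ℝ | f p = (L : EReal)}) 1)
    (hqℓ : qℓ = if 0 < pℓ then L / pℓ else 0)
    (hζ : ∀ p : ℝ, ζ p = if p < 0 then 0 else if p ≤ 1 then ((qℓ * p : ℝ) : EReal) else ⊤) :
    ({p : ℝ | f p = (L : EReal)}).Nonempty ∧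
    fconj (fconj (fun p => max (f p) (ellL L p))) = coE (fun p => max (f p) (ellL L p)) ∧
    coE (fun p => max (f p) (ellL L p)) = (fun p => max (f p) (ζ p)) ∧
    ContinuousOn (fun p => max (f p) (ζ p)) (Set.Iic 1) := by
  have hfbot : ∀ p, f p ≠ ⊥ := fun p => ne_of_gt (lt_of_lt_of_le EReal.bot_lt_zero (hpos p))
  have hf_le0 : ∀ p : ℝ, p ≤ 0 → f p = 0 := fun p hp =>
    le_antisymm (hf0 ▸ hmono hp) (hpos p)
  set S := {p : ℝ | f p = (L : EReal)} with hS
  -- Nonemptiness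
  have hSne : S.Nonempty := by
    rcases eq_or_lt_of_le hL with rfl | hLpos
    · exact ⟨0, by simp [hS, hf0]⟩
    · have hsub : Set.Icc (0:ℝ) 1 ⊆ Set.Iic 1 := Set.Icc_subset_Iic_self
      have hiv := intermediate_value_Icc (zero_le_one) (hcont.mono hsub)
      have hmem : (L:EReal) ∈ Set.Icc (f 0) (f 1) := by
        constructor
        · rw [hf0]; exact_mod_cast hL
        · exact hL1
      obtain ⟨p, _, hfp⟩ := hiv hmem
      exact ⟨p, hfp⟩
  have hSsub : S ⊆ Set.Iic 1 := by
    intro s hs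
    rw [Set.mem_Iic]
    by_contra hs1
    push_neg at hs1
    rw [Set.mem_setOf_eq, htop s hs1] at hs
    exact (EReal.coe_ne_top L) hs.symm
  have hSbdd : BddAbove S := ⟨1, hSsub⟩
  have hsup1 : sSup S ≤ 1 := csSup_le hSne hSsub
  have hpl_eq : pℓ = sSup S := by rw [hpℓ]; exact min_eq_left hsup1
  have hpl1 : pℓ ≤ 1 := hpl_eq ▸ hsup1
  have hplpos : 0 < L → 0 < pℓ := by
    intro hLpos
    obtain ⟨s, hs⟩ := hSne
    have hs0 : 0 < s := by
      by_contra hs0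
      push_neg at hs0
      rw [Set.mem_setOf_eq, hf_le0 s hs0] at hs
      have : (0:ℝ) = L := by exact_mod_cast hs
      linarith
    calc (0:ℝ) < s := hs0
      _ ≤ sSup S := le_csSup hSbdd hs
      _ = pℓ := hpl_eq.symm
  have hpl0 : 0 ≤ pℓ := by
    rcases eq_or_lt_of_le hL with rfl | hLpos
    · have h0S : (0:ℝ) ∈ S := by simp [hS, hf0]
      rw [hpl_eq]; exact le_csSup hSbdd h0S
    · exact le_of_lt (hplpos hLpos)
  have hL0 : pℓ ≤ 0 → L = 0 := by
    intro hple
    by_contra hL'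
    have := hplpos (lt_of_le_of_ne hL (Ne.symm hL'))
    linarith
  have hfpl_ge : (L:EReal) ≤ f pℓ := by
    obtain ⟨s, hs⟩ := hSne
    have hspl : s ≤ pℓ := hpl_eq ▸ le_csSup hSbdd hs
    calc (L:EReal) = f s := hs.symm
      _ ≤ f pℓ := hmono hspl
  have hflt : ∀ p : ℝ, p < pℓ → f p ≤ (L:EReal) := by
    intro p hp
    obtain ⟨s, hsS, hps⟩ := exists_lt_of_lt_csSup hSne (hpl_eq ▸ hp)
    calc f p ≤ f s := hmono (le_of_lt hps)
      _ = (L:EReal) := hsS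
  have hfpl : f pℓ = (L:EReal) := by
    refine le_antisymm ?_ hfpl_ge
    have hct : ContinuousWithinAt f (Set.Iio pℓ) pℓ :=
      (hcont pℓ hpl1).mono (fun x hx => Set.mem_Iic.2 (le_trans (le_of_lt hx) hpl1))
    refine le_of_tendsto hct ?_
    exact eventually_nhdsWithin_of_forall fun x hx => hflt x hx
  have hqlpl : qℓ * pℓ = L := by
    rw [hqℓ]
    by_cases hc : 0 < pℓ
    · rw [if_pos hc]; field_simp
    · rw [if_neg hc]
      push_neg at hc
      rw [zero_mul, hL0 hc]
  have hql0 : 0 ≤ qℓ := by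
    rw [hqℓ]
    by_cases hc : 0 < pℓ
    · rw [if_pos hc]; exact div_nonneg hL hc.le
    · rw [if_neg hc]
  -- convexity consequences
  have K2 : ∀ p : ℝ, pℓ ≤ p → ((qℓ * p : ℝ) : EReal) ≤ f p := by
    intro p hplp
    by_cases hq0 : qℓ * p ≤ 0
    · calc ((qℓ*p:ℝ):EReal) ≤ ((0:ℝ):EReal) := by exact_mod_cast hq0
        _ ≤ f p := by rw [EReal.coe_zero]; exact hpos p
    push_neg at hq0
    have hqpos : 0 < qℓ := by
      rcases eq_or_lt_of_le hql0 with heq | hgt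
      · exfalso; rw [← heq, zero_mul] at hq0; exact lt_irrefl 0 hq0
      · exact hgt
    have hppos : 0 < p := by nlinarith
    have hplpos' : 0 < pℓ := by
      by_contra hcn
      push_neg at hcn
      rw [hqℓ, if_neg (not_lt.2 hcn)] at hqpos
      exact lt_irrefl 0 hqpos
    by_cases hp1 : 1 < p
    · rw [htop p hp1]; exact le_top
    push_neg at hp1
    rcases eq_or_lt_of_le hplp with heq | hlt
    · rw [← heq, hqlpl, hfpl]
    · have ht0 : 0 ≤ pℓ / p := div_nonneg hpl0 hppos.le
      have ht1 : pℓ / p ≤ 1 := (div_le_one hppos).2 hplp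
      have key := hconv p 0 (pℓ / p) ht0 ht1
      rw [hf0, mul_zero, add_zero, mul_zero, add_zero] at key
      have htp : pℓ / p * p = pℓ := by field_simp
      rw [htp, hfpl] at key
      have hfp := hfin p hp1
      have hfb := hfbot p
      set y := (f p).toReal with hy
      have hyeq : f p = (y:EReal) := (EReal.coe_toReal hfp hfb).symm
      rw [hyeq, ← EReal.coe_mul] at key
      have key' : L ≤ pℓ / p * y := by exact_mod_cast key
      have hLp : L * p ≤ pℓ * y := by
        rw [div_mul_eq_mul_div] at key'
        exact (le_div_iff₀ hppos).1 key'
      have hgoal : qℓ * p ≤ y := by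
        rw [hqℓ, if_pos hplpos', div_mul_eq_mul_div, div_le_iff₀ hplpos']
        nlinarith
      rw [hyeq]
      exact_mod_cast hgoal
  have K2' : ∀ p : ℝ, pℓ ≤ p → p ≤ 1 → 0 < p → (L:EReal) ≤ f p := fun p hpl _ _ =>
    hfpl ▸ hmono hpl
  -- the two functions
  set g : ℝ → EReal := fun p => max (f p) (ellL L p) with hgdef
  set h : ℝ → EReal := fun p => max (f p) (ζ p) with hhdef
  have hg0 : g 0 = 0 := by
    rw [hgdef]
    simp only [ellL, if_pos (le_refl (0:ℝ)), hf0, max_self]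
  have hgtop : ∀ p : ℝ, 1 < p → g p = ⊤ := by
    intro p hp
    rw [hgdef]
    simp only [htop p hp]
    exact max_eq_left le_top
  have hhtop : ∀ p : ℝ, 1 < p → h p = ⊤ := by
    intro p hp
    rw [hhdef]
    simp only [htop p hp]
    exact max_eq_left le_top
  have hgpos : ∀ p, 0 ≤ g p := fun p => le_trans (hpos p) (le_max_left _ _)
  have hhpos : ∀ p, 0 ≤ h p := fun p => le_trans (hpos p) (le_max_left _ _)
  have hgbot : ∀ p, g p ≠ ⊥ := fun p => ne_of_gt (lt_of_lt_of_le EReal.bot_lt_zero (hgpos p))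
  have hhbot : ∀ p, h p ≠ ⊥ := fun p => ne_of_gt (lt_of_lt_of_le EReal.bot_lt_zero (hhpos p))
  have hζfin : ∀ p : ℝ, p ≤ 1 → ζ p ≠ ⊤ := by
    intro p hp
    by_cases h1 : p < 0
    · rw [hζ p, if_pos h1]; simp
    · rw [hζ p, if_neg h1, if_pos hp]; exact EReal.coe_ne_top _
  have hhfin : ∀ p : ℝ, p ≤ 1 → h p ≠ ⊤ := by
    intro p hp
    have : h p < ⊤ := max_lt (lt_top_iff_ne_top.2 (hfin p hp)) (lt_top_iff_ne_top.2 (hζfin p hp))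
    exact this.ne
  have hgpl : 0 < pℓ → g pℓ = (L:EReal) := by
    intro hplp
    rw [hgdef]
    simp only [hfpl, ellL, if_neg (not_le.2 hplp), if_pos hpl1, max_self]
  -- ζ ≤ g
  have hζle : ∀ p, ζ p ≤ g p := by
    intro p
    rw [hζ p]
    split_ifs with h1 h2
    · exact hgpos p
    · push_neg at h1
      by_cases hpp : p ≤ pℓ
      · rcases eq_or_lt_of_le h1 with heq | hp0
        · have : ((qℓ * p : ℝ):EReal) = 0 := by rw [← heq, mul_zero]; exact EReal.coe_zero
          rw [this]; exact hgpos p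
        · have hh1 : qℓ * p ≤ L := by
            calc qℓ * p ≤ qℓ * pℓ := mul_le_mul_of_nonneg_left hpp hql0
              _ = L := hqlpl
          have hell : ellL L p = (L:EReal) := by
            rw [ellL, if_neg (not_le.2 hp0), if_pos h2]
          calc ((qℓ*p:ℝ):EReal) ≤ (L:EReal) := by exact_mod_cast hh1
            _ = ellL L p := hell.symm
            _ ≤ g p := le_max_right _ _
      · push_neg at hpp
        exact (K2 p hpp.le).trans (le_max_left _ _)
    · rw [hgtop p (not_le.1 h2)]
  have hgh : ∀ p, h p ≤ g p := by
    intro p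
    rw [hhdef]
    exact max_le (le_max_left _ _) (hζle p)
  -- g = h outside (0, pℓ)
  have hgh_eq : ∀ p : ℝ, p ≤ 0 ∨ pℓ ≤ p → g p = h p := by
    intro p hp
    rcases le_or_gt p 0 with hp0 | hp0
    · have hell : ellL L p = 0 := by rw [ellL, if_pos hp0]
      have hzeta : ζ p = 0 := by
        rw [hζ p]
        rcases eq_or_lt_of_le hp0 with heq | hlt
        · subst heq
          rw [if_neg (lt_irrefl (0:ℝ)), if_pos (by norm_num : (0:ℝ) ≤ 1), mul_zero]
          exact EReal.coe_zero
        · rw [if_pos hlt]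
      rw [hgdef, hhdef]
      simp only [hell, hzeta]
    · have hplp : pℓ ≤ p := by
        rcases hp with hc | hc
        · linarith
        · exact hc
      by_cases hp1 : p ≤ 1
      · have hell : ellL L p = (L:EReal) := by rw [ellL, if_neg (not_le.2 hp0), if_pos hp1]
        have hzeta : ζ p = ((qℓ*p:ℝ):EReal) := by
          rw [hζ p, if_neg (not_lt.2 hp0.le), if_pos hp1]
        have h1 : (L:EReal) ≤ f p := hfpl ▸ hmono hplp
        have h2 : ((qℓ*p:ℝ):EReal) ≤ f p := K2 p hplp
        rw [hgdef, hhdef]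
        simp only [hell, hzeta, max_eq_left h1, max_eq_left h2]
      · push_neg at hp1
        rw [hgtop p hp1, hhtop p hp1]
  -- convexity of ζ and h
  have hζconv : ConvexE ζ := by
    have hcv : ConvexOn ℝ Set.univ (fun p : ℝ => max (qℓ * p) 0) := by
      refine ConvexOn.sup ⟨convex_univ, ?_⟩ (convexOn_const 0 convex_univ)
      intro x _ y _ a b ha hb hab
      simp only [smul_eq_mul]
      exact le_of_eq (by ring)
    have heq : ζ = fun p => max (((max (qℓ*p) 0 : ℝ)) : EReal)
        (if p ≤ 1 then (0:EReal) else ⊤) := by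
      funext p
      rw [hζ p]
      by_cases h1 : p < 0
      · have hm : max (qℓ*p) 0 = 0 := max_eq_right (mul_nonpos_of_nonneg_of_nonpos hql0 h1.le)
        rw [if_pos h1, hm, if_pos (by linarith : p ≤ 1), EReal.coe_zero, max_self]
      · push_neg at h1
        by_cases h2 : p ≤ 1
        · have hm : max (qℓ*p) 0 = qℓ*p := max_eq_left (mul_nonneg hql0 h1)
          rw [if_neg (not_lt.2 h1), if_pos h2, hm, if_pos h2]
          exact (max_eq_left (by
            exact_mod_cast mul_nonneg hql0 h1 : (0:EReal) ≤ ((qℓ*p:ℝ):EReal))).symm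
        · rw [if_neg (not_lt.2 h1), if_neg h2, if_neg h2]
          exact (max_eq_right le_top).symm
    rw [heq]
    exact ConvexE.max' (convexE_coe hcv) convexE_ind
  have hhconv : ConvexE h := by
    rw [hhdef]
    exact ConvexE.max' hconv hζconv
  -- continuity of h on Iic 1
  have hζcont : ContinuousOn ζ (Set.Iic 1) := by
    have hc1 : Continuous fun p : ℝ => (((max (qℓ * p) 0 : ℝ)) : EReal) :=
      continuous_coe_real_ereal.comp ((continuous_const.mul continuous_id).max continuous_const)
    refine hc1.continuousOn.congr ?_
    intro p hp
    rw [hζ p]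
    by_cases h1 : p < 0
    · have hm : max (qℓ*p) 0 = 0 := max_eq_right (mul_nonpos_of_nonneg_of_nonpos hql0 h1.le)
      simp only [if_pos h1, hm, EReal.coe_zero]
    · push_neg at h1
      have hm : max (qℓ*p) 0 = qℓ*p := max_eq_left (mul_nonneg hql0 h1)
      simp only [if_neg (not_lt.2 h1), if_pos (Set.mem_Iic.1 hp), hm]
  have hhcont : ContinuousOn h (Set.Iic 1) := by
    rw [hhdef]
    exact fun p hp => ((hcont p hp).max (hζcont p hp))
  have hhlsc : LowerSemicontinuous h := lsc_of_contOn hhcont hhtop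
  -- coE g ≤ h (chord argument)
  have hCle : ∀ p : ℝ, coE g p ≤ h p := by
    intro p
    refine iSup_le ?_
    rintro ⟨k, hkconv, hklsc, hkle⟩
    simp only
    by_cases hp0 : p ≤ 0
    · exact (hkle p).trans (le_of_eq (hgh_eq p (Or.inl hp0)))
    push_neg at hp0
    by_cases hppl : pℓ ≤ p
    · exact (hkle p).trans (le_of_eq (hgh_eq p (Or.inr hppl)))
    push_neg at hppl
    have hplpos' : 0 < pℓ := lt_trans hp0 hppl
    have ht0 : 0 ≤ p / pℓ := div_nonneg hp0.le hplpos'.le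
    have ht1 : p / pℓ ≤ 1 := (div_le_one hplpos').2 hppl.le
    have key := hkconv pℓ 0 (p/pℓ) ht0 ht1
    rw [mul_zero, add_zero] at key
    have htp : p / pℓ * pℓ = p := by field_simp
    rw [htp] at key
    have hkpl : k pℓ ≤ (L:EReal) := by
      have hk := hkle pℓ
      rwa [hgpl hplpos'] at hk
    have hk0 : k 0 ≤ 0 := by
      have hk := hkle 0
      rwa [hg0] at hk
    have hco1 : (0:EReal) ≤ ((p/pℓ : ℝ) : EReal) := by exact_mod_cast ht0
    have hco2 : (0:EReal) ≤ ((1 - p/pℓ : ℝ) : EReal) := by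
      have : (0:ℝ) ≤ 1 - p/pℓ := by linarith
      exact_mod_cast this
    have step1 : ((p/pℓ : ℝ):EReal) * k pℓ ≤ ((p/pℓ * L : ℝ):EReal) := by
      calc ((p/pℓ : ℝ):EReal) * k pℓ ≤ ((p/pℓ : ℝ):EReal) * (L:EReal) :=
            mul_le_mul_of_nonneg_left hkpl hco1
        _ = ((p/pℓ * L : ℝ):EReal) := (EReal.coe_mul _ _).symm
    have step2 : ((1 - p/pℓ : ℝ):EReal) * k 0 ≤ 0 := by
      calc ((1 - p/pℓ : ℝ):EReal) * k 0 ≤ ((1 - p/pℓ : ℝ):EReal) * 0 :=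
            mul_le_mul_of_nonneg_left hk0 hco2
        _ = 0 := mul_zero _
    have hkp : k p ≤ ((p/pℓ * L : ℝ):EReal) := by
      calc k p ≤ _ := key
        _ ≤ ((p/pℓ * L : ℝ):EReal) + 0 := add_le_add step1 step2
        _ = ((p/pℓ * L : ℝ):EReal) := add_zero _
    have htl : p/pℓ * L = qℓ * p := by
      rw [hqℓ, if_pos hplpos']
      field_simp
    have hzeta : ζ p = ((qℓ*p:ℝ):EReal) := by
      rw [hζ p, if_neg (not_lt.2 hp0.le), if_pos (by linarith : p ≤ 1)]
    refine hkp.trans ?_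
    rw [htl, ← hzeta, hhdef]
    exact le_max_right _ _
  -- h ≤ coE g
  have hhcoE : ∀ p, h p ≤ coE g p := by
    intro p
    exact le_iSup
      (fun k : {k : ℝ → EReal // ConvexE k ∧ LowerSemicontinuous k ∧ ∀ x, k x ≤ g x} => k.1 p)
      ⟨h, hhconv, hhlsc, hgh⟩
  -- fconj g is nonnegative
  have hfggz : ∀ q : ℝ, 0 ≤ fconj g q := by
    intro q
    have hterm : ((0*q:ℝ):EReal) - g 0 ≤ fconj g q :=
      le_iSup (fun p => ((p*q:ℝ):EReal) - g p) 0
    rw [hg0, zero_mul, EReal.coe_zero] at hterm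
    have : (0:EReal) - 0 = 0 := by simp
    rwa [this] at hterm
  -- fconj fconj g ≤ coE g
  have hBle : ∀ p, fconj (fconj g) p ≤ coE g p := by
    intro p
    refine iSup_le fun q => ?_
    by_cases hcq : fconj g q = ⊤
    · rw [hcq, ereal_sub_top]
      exact bot_le
    · have hcb : fconj g q ≠ ⊥ := ne_of_gt (lt_of_lt_of_le EReal.bot_lt_zero (hfggz q))
      set c := (fconj g q).toReal with hcdef
      have hcoec : fconj g q = (c:EReal) := (EReal.coe_toReal hcq hcb).symm
      set k : ℝ → EReal := fun r => ((r * q - c : ℝ) : EReal) with hkdef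
      have hkconv : ConvexE k := by
        apply convexE_coe
        refine ⟨convex_univ, ?_⟩
        intro x _ y _ a b ha hb hab
        simp only [smul_eq_mul]
        have hb' : b = 1 - a := by linarith
        subst hb'
        exact le_of_eq (by ring)
      have hklsc : LowerSemicontinuous k := by
        have : Continuous k := continuous_coe_real_ereal.comp
          ((continuous_id.mul continuous_const).sub continuous_const)
        exact this.lowerSemicontinuous
      have hkle : ∀ r, k r ≤ g r := by
        intro r
        have hterm : ((r*q:ℝ):EReal) - g r ≤ (c:EReal) := by
          rw [← hcoec]
          exact le_iSup (fun p' => ((p'*q:ℝ):EReal) - g p') r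
        by_cases hgr : g r = ⊤
        · rw [hgr]; exact le_top
        · have hgrb : g r ≠ ⊥ := hgbot r
          have hyeq : g r = (((g r).toReal : ℝ) : EReal) := (EReal.coe_toReal hgr hgrb).symm
          rw [hyeq] at hterm ⊢
          rw [← EReal.coe_sub] at hterm
          have : r * q - (g r).toReal ≤ c := by exact_mod_cast hterm
          rw [hkdef]
          simp only
          exact_mod_cast (by linarith : r * q - c ≤ (g r).toReal)
      have hfinal : ((q*p:ℝ):EReal) - fconj g q = k p := by
        rw [hcoec, hkdef]
        simp only
        rw [← EReal.coe_sub]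
        norm_cast
        ring
      rw [hfinal]
      exact le_iSup
        (fun k' : {k' : ℝ → EReal // ConvexE k' ∧ LowerSemicontinuous k' ∧ ∀ x, k' x ≤ g x} => k'.1 p)
        ⟨k, hkconv, hklsc, hkle⟩
  -- h ≤ fconj fconj g
  have hAle : ∀ p, h p ≤ fconj (fconj g) p := by
    intro p
    rcases lt_trichotomy p 1 with hplt | hpeq | hpgt
    · -- p < 1 : subgradient argument
      obtain ⟨q, hq⟩ := exists_subgrad hhconv hhfin hhbot hplt
      have hhp_fin := hhfin p hplt.le
      have hhp_bot := hhbot p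
      set a := (h p).toReal with hadef
      have hhpa : h p = (a:EReal) := (EReal.coe_toReal hhp_fin hhp_bot).symm
      have hfc : fconj g q ≤ ((p*q - a : ℝ):EReal) := by
        refine iSup_le fun r => ?_
        by_cases hr1 : r ≤ 1
        · have h1 : ((a + q*(r-p) : ℝ):EReal) ≤ h r := by
            have := hq r hr1
            rwa [hhpa, ← EReal.coe_add] at this
          have h2 : ((a + q*(r-p) : ℝ):EReal) ≤ g r := h1.trans (hgh r)
          calc ((r*q:ℝ):EReal) - g r ≤ ((r*q:ℝ):EReal) - ((a + q*(r-p):ℝ):EReal) :=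
                EReal.sub_le_sub (le_refl _) h2
            _ = ((p*q - a : ℝ):EReal) := by
                rw [← EReal.coe_sub]
                norm_cast
                ring
        · push_neg at hr1
          rw [hgtop r hr1, ereal_sub_top]
          exact bot_le
      calc h p = (a:EReal) := hhpa
        _ = ((q*p:ℝ):EReal) - ((p*q - a:ℝ):EReal) := by
            rw [← EReal.coe_sub]
            norm_cast
            ring
        _ ≤ ((q*p:ℝ):EReal) - fconj g q := EReal.sub_le_sub (le_refl _) hfc
        _ ≤ fconj (fconj g) p := le_iSup (fun q' => ((q'*p:ℝ):EReal) - fconj g q') q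
    · -- p = 1 : approximation argument
      subst hpeq
      have hh1_fin := hhfin 1 (le_refl 1)
      have hh1_bot := hhbot 1
      set c := (h 1).toReal with hcdef
      have hh1c : h 1 = (c:EReal) := (EReal.coe_toReal hh1_fin hh1_bot).symm
      rw [hh1c]
      apply ereal_le_of_forall_eps
      intro ε hε
      have hlt : ((c - ε : ℝ):EReal) < h 1 := by
        rw [hh1c]
        exact_mod_cast (by linarith : c - ε < c)
      have hev : ∀ᶠ r in 𝓝[Set.Iic 1] (1:ℝ), h r ∈ Set.Ioi ((c - ε:ℝ):EReal) :=
        (hhcont 1 (Set.mem_Iic.2 (le_refl 1))) (Ioi_mem_nhds hlt)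
      obtain ⟨δ, hδ, hball⟩ := Metric.mem_nhdsWithin_iff.1 hev
      set q := max 0 ((c - ε)/δ) with hqdef
      have hq0 : 0 ≤ q := le_max_left _ _
      have hqd : c - ε ≤ δ * q := by
        have h1 : (c - ε)/δ ≤ q := le_max_right _ _
        calc c - ε = δ * ((c - ε)/δ) := by field_simp
          _ ≤ δ * q := mul_le_mul_of_nonneg_left h1 hδ.le
      have hfc : fconj g q ≤ ((q - (c - ε) : ℝ):EReal) := by
        refine iSup_le fun r => ?_
        by_cases hr1 : r ≤ 1
        · by_cases hrδ : 1 - δ < r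
          · have hrball : r ∈ Metric.ball (1:ℝ) δ ∩ Set.Iic 1 := by
              constructor
              · rw [Metric.mem_ball, Real.dist_eq, abs_lt]
                constructor <;> linarith
              · exact hr1
            have hhr : ((c - ε:ℝ):EReal) < h r := hball hrball
            have hgr : ((c - ε:ℝ):EReal) ≤ g r := (le_of_lt hhr).trans (hgh r)
            calc ((r*q:ℝ):EReal) - g r ≤ ((r*q:ℝ):EReal) - ((c - ε:ℝ):EReal) :=
                  EReal.sub_le_sub (le_refl _) hgr
              _ = ((r*q - (c - ε):ℝ):EReal) := by rw [← EReal.coe_sub]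
              _ ≤ ((q - (c - ε) : ℝ):EReal) := by
                  have : r * q ≤ q := by nlinarith
                  exact_mod_cast (by linarith : r*q - (c-ε) ≤ q - (c-ε))
          · push_neg at hrδ
            calc ((r*q:ℝ):EReal) - g r ≤ ((r*q:ℝ):EReal) - 0 :=
                  EReal.sub_le_sub (le_refl _) (hgpos r)
              _ = ((r*q:ℝ):EReal) := by
                  rw [show (0:EReal) = ((0:ℝ):EReal) from rfl, ← EReal.coe_sub]
                  norm_cast
                  ring
              _ ≤ ((q - (c - ε) : ℝ):EReal) := by
                  have h1 : r * q ≤ (1 - δ) * q := mul_le_mul_of_nonneg_right hrδ hq0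
                  exact_mod_cast (by nlinarith : r*q ≤ q - (c - ε))
        · push_neg at hr1
          rw [hgtop r hr1, ereal_sub_top]
          exact bot_le
      calc ((c - ε:ℝ):EReal) = ((q*1:ℝ):EReal) - ((q - (c - ε) : ℝ):EReal) := by
            rw [← EReal.coe_sub]
            norm_cast
            ring
        _ ≤ ((q*1:ℝ):EReal) - fconj g q := EReal.sub_le_sub (le_refl _) hfc
        _ ≤ fconj (fconj g) 1 := le_iSup (fun q' => ((q'*1:ℝ):EReal) - fconj g q') q
    · -- p > 1 : sup is ⊤
      have htopp : fconj (fconj g) p = ⊤ := by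
        apply ereal_eq_top_of_forall
        intro y
        set q := max 0 (y/(p-1)) with hqdef
        have hq0 : 0 ≤ q := le_max_left _ _
        have hqy : y ≤ q * (p - 1) := by
          have h1 : y/(p-1) ≤ q := le_max_right _ _
          have hp1 : 0 < p - 1 := by linarith
          calc y = y/(p-1) * (p-1) := by field_simp
            _ ≤ q * (p-1) := mul_le_mul_of_nonneg_right h1 hp1.le
        have hfc : fconj g q ≤ ((q : ℝ):EReal) := by
          refine iSup_le fun r => ?_
          by_cases hr1 : r ≤ 1
          · calc ((r*q:ℝ):EReal) - g r ≤ ((r*q:ℝ):EReal) - 0 :=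
                  EReal.sub_le_sub (le_refl _) (hgpos r)
              _ = ((r*q:ℝ):EReal) := by
                  rw [show (0:EReal) = ((0:ℝ):EReal) from rfl, ← EReal.coe_sub]
                  norm_cast
                  ring
              _ ≤ ((q : ℝ):EReal) := by
                  have : r * q ≤ q := by nlinarith
                  exact_mod_cast this
          · push_neg at hr1
            rw [hgtop r hr1, ereal_sub_top]
            exact bot_le
        calc (y:EReal) ≤ ((q*p - q:ℝ):EReal) := by
              exact_mod_cast (by nlinarith : y ≤ q*p - q)
          _ = ((q*p:ℝ):EReal) - ((q : ℝ):EReal) := by rw [← EReal.coe_sub]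
          _ ≤ ((q*p:ℝ):EReal) - fconj g q := EReal.sub_le_sub (le_refl _) hfc
          _ ≤ fconj (fconj g) p := le_iSup (fun q' => ((q'*p:ℝ):EReal) - fconj g q') q
      rw [htopp]
      exact le_top
  refine ⟨hSne, ?_, ?_, ?_⟩
  · funext p
    exact le_antisymm (hBle p) ((hCle p).trans (hAle p))
  · funext p
    exact le_antisymm (hCle p) ((hAle p).trans (hBle p))
  · exact hhcont
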